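/- Let λ_min, λ_max, λ₁, λ₂ be real numbers with 0 < λ_min ≤ λ₁ ≤ λ_max and λ_min ≤ λ₂ ≤ λ_max. Let z₁ be any complex root of z² + 2√λ_min·z + λ₁ and z₂ any complex root of z² + 2√λ_min·z + λ₂. Then z₂ ≠ 0 and |z₁| / |z₂| ≤ √(λ_max / λ_min). In particular, the ratio of the largest to the smallest modulus among all eigenvalues of the heavy-ball system matrix is at most the square root of the condition number λ_max/λ_min of A. -/

import Mathlib

lemma root_abs (lam_min lam : ℝ) (h0 : 0 < lam_min) (hl : lam_min ≤ lam)
    (z : ℂ) (hz : z ^ 2 + 2 * (Real.sqrt lam_min : ℂ) * z + (lam : ℂ) = 0) :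
    ‖z‖ = Real.sqrt lam := by
  set s := Real.sqrt lam_min with hs
  have hs2 : s ^ 2 = lam_min := Real.sq_sqrt h0.le
  obtain ⟨x, y⟩ := z
  have hre := congrArg Complex.re hz
  have him := congrArg Complex.im hz
  simp [Complex.ext_iff, pow_two, Complex.mul_re, Complex.mul_im] at hre him
  -- hre : x*x - y*y + 2*s*x + lam = 0 (in some form), him : y*(x+s)=0 form
  have hkey : x ^ 2 + y ^ 2 = lam := by
    rcases mul_eq_zero.mp (by nlinarith [him] : y * (x + s) = 0) with hy | hxs
    · subst hy
      have hle : lam ≤ s ^ 2 := by nlinarith [sq_nonneg (x + s)]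
      have heq : lam = s ^ 2 := le_antisymm hle (by linarith)
      have : (x + s) ^ 2 = 0 := by nlinarith
      have hx : x = -s := by nlinarith [sq_nonneg (x + s)]
      subst hx; nlinarith
    · have hx : x = -s := by linarith
      subst hx; nlinarith
  have : ‖(⟨x, y⟩ : ℂ)‖ = Real.sqrt (x ^ 2 + y ^ 2) := by
    rw [Complex.norm_def, Complex.normSq_mk]; ring_nf
  rw [this, hkey]

/-- With damping `γ = 2√λ_min`, the ratio of moduli of any two roots of the
heavy-ball characteristic quadratics `z² + γ z + λᵢ` (with
`λ_min ≤ λᵢ ≤ λ_max`) is bounded by `√(λ_max / λ_min)`. -/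
theorem stmt_9 (lam_min lam_max lam₁ lam₂ : ℝ)
    (h0 : 0 < lam_min) (h1l : lam_min ≤ lam₁) (h1u : lam₁ ≤ lam_max)
    (h2l : lam_min ≤ lam₂) (h2u : lam₂ ≤ lam_max)
    (z₁ z₂ : ℂ)
    (hz₁ : z₁ ^ 2 + 2 * (Real.sqrt lam_min : ℂ) * z₁ + (lam₁ : ℂ) = 0)
    (hz₂ : z₂ ^ 2 + 2 * (Real.sqrt lam_min : ℂ) * z₂ + (lam₂ : ℂ) = 0) :
    z₂ ≠ 0 ∧ ‖z₁‖ / ‖z₂‖ ≤ Real.sqrt (lam_max / lam_min) := by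
  have h1 := root_abs lam_min lam₁ h0 h1l z₁ hz₁
  have h2 := root_abs lam_min lam₂ h0 h2l z₂ hz₂
  have h2pos : 0 < Real.sqrt lam₂ := Real.sqrt_pos.mpr (lt_of_lt_of_le h0 h2l)
  constructor
  · intro h
    rw [h] at h2
    simp at h2
    linarith
  · rw [h1, h2, ← Real.sqrt_div (by linarith : (0:ℝ) ≤ lam₁)]
    exact Real.sqrt_le_sqrt (div_le_div₀ (by linarith) h1u (by linarith) h2l)
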